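/- For c > 0 and 0 ≤ θ < 1, ψ_c(θ) admits the power series expansion ψ_c(θ) = Σ_{k≥2} (θ^k/k) · (R_c + R_c² + ... + R_c^{k-1})/(k-1), where R_c = 1/(c+1). -/

import Mathlib

open Set

/-- Talagrand's function `ψ_c`. -/
noncomputable def psiC (c : ℝ) (θ : ℝ) : ℝ :=
  c⁻¹ * ((1 - θ) * Real.log (1 - θ) - (1 - θ + c) * Real.log ((1 - θ + c) / (1 + c)))

lemma aux_hasSum (x : ℝ) (hx : |x| < 1) :
    HasSum (fun m : ℕ => x ^ (m + 2) / ((m + 1) * (m + 2)))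
      ((1 - x) * Real.log (1 - x) + x) := by
  have L := Real.hasSum_pow_div_log_of_abs_lt_one hx
  have L1 : HasSum (fun m : ℕ => x * (x ^ (m + 1) / (m + 1)))
      (x * -Real.log (1 - x)) := L.mul_left x
  have L2 := (hasSum_nat_add_iff' (f := fun n : ℕ => x ^ (n + 1) / ((n : ℝ) + 1)) 1).2 L
  simp only [Finset.range_one, Finset.sum_singleton, Nat.cast_zero, zero_add, pow_one,
    div_one] at L2
  have h := L1.sub L2
  have hfun : (fun m : ℕ => x * (x ^ (m + 1) / (m + 1)) - x ^ (m + 1 + 1) / ((↑(m + 1) : ℝ) + 1))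
      = fun m : ℕ => x ^ (m + 2) / ((m + 1) * (m + 2)) := by
    funext m
    have h1 : (m : ℝ) + 1 ≠ 0 := by positivity
    have h2 : (m : ℝ) + 2 ≠ 0 := by positivity
    push_cast
    field_simp
    ring
  rw [hfun] at h
  convert h using 1
  all_goals (try rfl)
  ring

theorem stmt8 (c : ℝ) (hc : 0 < c) (θ : ℝ) (hθ : θ ∈ Ico (0:ℝ) 1) :
    psiC c θ = ∑' m : ℕ,
      θ ^ (m + 2) / (m + 2) *
        ((∑ j ∈ Finset.range (m + 1), (1 / (c + 1)) ^ (j + 1)) / (m + 1)) := by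
  obtain ⟨hθ0, hθ1⟩ := hθ
  have hc1 : (0:ℝ) < c + 1 := by linarith
  have hc1' : c + 1 ≠ 0 := ne_of_gt hc1
  have hcne : c ≠ 0 := ne_of_gt hc
  obtain ⟨R, hRdef⟩ : ∃ R : ℝ, R = 1 / (c + 1) := ⟨_, rfl⟩
  have hR0 : 0 < R := by rw [hRdef]; positivity
  have hR1 : R < 1 := by rw [hRdef, div_lt_one hc1]; linarith
  have hRc : R * (c + 1) = 1 := by rw [hRdef]; field_simp
  have hxabs : |θ| < 1 := by rw [abs_of_nonneg hθ0]; exact hθ1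
  have hyabs : |θ * R| < 1 := by
    rw [abs_of_nonneg (by positivity)]
    calc θ * R ≤ 1 * R := by nlinarith
    _ < 1 := by linarith
  have A := aux_hasSum θ hxabs
  have B := aux_hasSum (θ * R) hyabs
  have key := (A.sub (B.mul_left (1 + c))).mul_left c⁻¹
  have hfun : (fun m : ℕ => c⁻¹ * (θ ^ (m + 2) / ((m + 1) * (m + 2)) -
      (1 + c) * ((θ * R) ^ (m + 2) / ((m + 1) * (m + 2)))))
      = fun m : ℕ => θ ^ (m + 2) / (m + 2) *
        ((∑ j ∈ Finset.range (m + 1), (1 / (c + 1)) ^ (j + 1)) / (m + 1)) := by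
    funext m
    have h1 : (m : ℝ) + 1 ≠ 0 := by positivity
    have h2 : (m : ℝ) + 2 ≠ 0 := by positivity
    have hRne : R ≠ 1 := ne_of_lt hR1
    have hRne0 : R ≠ 0 := ne_of_gt hR0
    have hgeom : ∑ j ∈ Finset.range (m + 1), (1 / (c + 1)) ^ (j + 1)
        = (1 - R ^ (m + 1)) / c := by
      have hs : ∑ j ∈ Finset.range (m + 1), (1 / (c + 1)) ^ (j + 1)
          = (∑ j ∈ Finset.range (m + 1), R ^ j) * R := by
        rw [Finset.sum_mul]
        refine Finset.sum_congr rfl fun j _ => ?_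
        rw [← hRdef]; ring
      rw [hs, geom_sum_eq hRne]
      have hRm : R - 1 = -(c * R) := by nlinarith
      rw [hRm]
      field_simp
      ring
    have hpow : (1 + c) * R ^ (m + 2) = R ^ (m + 1) := by
      calc (1 + c) * R ^ (m + 2) = R ^ (m + 1) * (R * (c + 1)) := by ring
      _ = R ^ (m + 1) := by rw [hRc, mul_one]
    have hL : (1 + c) * ((θ * R) ^ (m + 2) / (((m : ℝ) + 1) * ((m : ℝ) + 2)))
        = θ ^ (m + 2) * R ^ (m + 1) / (((m : ℝ) + 1) * ((m : ℝ) + 2)) := by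
      rw [mul_pow]
      rw [show (1 + c) * (θ ^ (m + 2) * R ^ (m + 2) / (((m : ℝ) + 1) * ((m : ℝ) + 2)))
          = θ ^ (m + 2) * ((1 + c) * R ^ (m + 2)) / (((m : ℝ) + 1) * ((m : ℝ) + 2)) from by ring,
        hpow]
    rw [hgeom, hL]
    field_simp
  rw [hfun] at key
  rw [key.tsum_eq]
  have harg : 1 - θ * R = (1 - θ + c) / (1 + c) := by
    rw [hRdef]; field_simp; ring
  rw [harg, hRdef]
  unfold psiC
  field_simp
  ring
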